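/- Let X ⊆ S_n be a finite set of permutations such that d(x,y) = n-1 for all distinct x, y ∈ X (i.e., no two share an adjacency). Then π ∈ S_n is a breakpoint median of X (minimizes the total breakpoint distance to X) if and only if A_π ⊆ ⋃_{x∈X} A_x. -/

import Mathlib

open Finset

/-- The set of adjacencies of a permutation of `{1,...,n}`: unordered pairs of
consecutive entries. -/
def bpAdj {n : ℕ} (x : Equiv.Perm (Fin n)) : Finset (Sym2 (Fin n)) :=
  Finset.image (fun i : Fin (n - 1) =>
    s(x ⟨i.val, by have := i.isLt; omega⟩, x ⟨i.val + 1, by have := i.isLt; omega⟩))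
    Finset.univ

/-- The breakpoint distance `d(x,y) = (n-1) - |A_x ∩ A_y|`. -/
def bpDist {n : ℕ} (x y : Equiv.Perm (Fin n)) : ℕ :=
  (n - 1) - (bpAdj x ∩ bpAdj y).card

/-- Total breakpoint distance of `z` to a finite set `X`. -/
def bpTotal {n : ℕ} (z : Equiv.Perm (Fin n)) (X : Finset (Equiv.Perm (Fin n))) : ℕ :=
  ∑ y ∈ X, bpDist z y

/-- `π` is a breakpoint median of `X`: it minimizes the total breakpoint distance to `X`. -/
def IsBpMedian {n : ℕ} (π : Equiv.Perm (Fin n)) (X : Finset (Equiv.Perm (Fin n))) : Prop :=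
  ∀ σ : Equiv.Perm (Fin n), bpTotal π X ≤ bpTotal σ X

lemma bpAdj_card {n : ℕ} (z : Equiv.Perm (Fin n)) : (bpAdj z).card = n - 1 := by
  rw [bpAdj, Finset.card_image_of_injective _ ?_, Finset.card_univ, Fintype.card_fin]
  intro i j h
  simp only [Sym2.eq_iff] at h
  rcases h with ⟨h1, h2⟩ | ⟨h1, h2⟩ <;>
  · have e1 := congrArg Fin.val (z.injective h1)
    have e2 := congrArg Fin.val (z.injective h2)
    simp only [] at e1 e2
    exact Fin.ext (by omega)

lemma bp_inter_card_le {n : ℕ} (z y : Equiv.Perm (Fin n)) :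
    (bpAdj z ∩ bpAdj y).card ≤ n - 1 :=
  le_trans (card_le_card inter_subset_left) (le_of_eq (bpAdj_card z))

/-- If the permutations of a nonempty set X are at pairwise maximal breakpoint
distance n-1, then π is a breakpoint median of X iff A_π ⊆ ⋃_{x ∈ X} A_x. -/
theorem median_iff_adj_subset_union (n : ℕ) (X : Finset (Equiv.Perm (Fin n)))
    (hne : X.Nonempty)
    (hmax : ∀ x ∈ X, ∀ y ∈ X, x ≠ y → bpDist x y = n - 1)
    (π : Equiv.Perm (Fin n)) :
    IsBpMedian π X ↔ bpAdj π ⊆ X.biUnion bpAdj := by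
  set U := X.biUnion bpAdj with hU
  have hdisj : ∀ x ∈ X, ∀ y ∈ X, x ≠ y → bpAdj x ∩ bpAdj y = ∅ := by
    intro x hx y hy hxy
    have h1 := hmax x hx y hy hxy
    have h2 := bp_inter_card_le x y
    rw [bpDist] at h1
    exact card_eq_zero.mp (by omega)
  have hTU : ∀ z : Equiv.Perm (Fin n),
      ∑ y ∈ X, (bpAdj z ∩ bpAdj y).card = (bpAdj z ∩ U).card := by
    intro z
    rw [hU, ← Finset.card_biUnion ?_]
    · congr 1
      ext a
      simp only [Finset.mem_biUnion, Finset.mem_inter]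
      tauto
    · intro x hx y hy hxy
      rw [Function.onFun, Finset.disjoint_left]
      intro a ha ha'
      have : a ∈ bpAdj x ∩ bpAdj y :=
        mem_inter.mpr ⟨(mem_inter.mp ha).2, (mem_inter.mp ha').2⟩
      rw [hdisj x hx y hy hxy] at this
      simp at this
  have hT_le : ∀ z : Equiv.Perm (Fin n), (bpAdj z ∩ U).card ≤ n - 1 := fun z =>
    (card_le_card inter_subset_left).trans (bpAdj_card z).le
  have hsum : ∀ z : Equiv.Perm (Fin n),
      bpTotal z X + (bpAdj z ∩ U).card = X.card * (n - 1) := by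
    intro z
    rw [bpTotal, ← hTU z, ← Finset.sum_add_distrib]
    rw [Finset.sum_congr rfl (fun y _ => by
      rw [bpDist, Nat.sub_add_cancel (bp_inter_card_le z y)]),
      Finset.sum_const, smul_eq_mul]
  obtain ⟨x, hx⟩ := hne
  have hTx : (bpAdj x ∩ U).card = n - 1 := by
    refine le_antisymm (hT_le x) ?_
    rw [← hTU x]
    calc n - 1 = (bpAdj x ∩ bpAdj x).card := by rw [inter_self, bpAdj_card]
      _ ≤ _ := Finset.single_le_sum (f := fun y => (bpAdj x ∩ bpAdj y).card)
          (fun _ _ => Nat.zero_le _) hx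
  constructor
  · intro hmed
    have h1 : bpTotal π X ≤ bpTotal x X := hmed x
    have h2 := hsum π
    have h3 := hsum x
    have hπ : (bpAdj π ∩ U).card = n - 1 := le_antisymm (hT_le π) (by omega)
    have heq : bpAdj π ∩ U = bpAdj π :=
      Finset.eq_of_subset_of_card_le inter_subset_left (by rw [hπ, bpAdj_card])
    exact Finset.inter_eq_left.mp heq
  · intro hsub σ
    have hπ : bpAdj π ∩ U = bpAdj π := Finset.inter_eq_left.mpr hsub
    have h2 := hsum π
    have h3 := hsum σ
    have h4 := hT_le σ
    rw [hπ, bpAdj_card] at h2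
    omega
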